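/- Let C be an additive right polycyclic code induced by a binary vector a, and let b be a nonzero binary polynomial of degree less than n lying in C (under the identification with R_n) that has minimal degree among all nonzero binary polynomials in C. Then b divides x^n − a(x) in F2[x]. -/

import Mathlib

open Polynomial

noncomputable section

abbrev F4 : Type := GaloisField 2 2

def IsBin (z : F4) : Prop := z = 0 ∨ z = 1

def IsBinVec {n : ℕ} (a : Fin n → F4) : Prop := ∀ i, IsBin (a i)

def IsBinPoly (p : Polynomial F4) : Prop := ∀ i, IsBin (p.coeff i)

def polyOfVec {n : ℕ} (c : Fin n → F4) : Polynomial F4 :=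
  ∑ i : Fin n, Polynomial.C (c i) * X ^ (i : ℕ)

def rightShift {n : ℕ} (a c : Fin n → F4) : Fin n → F4 := fun i =>
  (if (i : ℕ) = 0 then 0 else c ⟨(i : ℕ) - 1, lt_of_le_of_lt (Nat.sub_le _ _) i.isLt⟩)
    + c ⟨n - 1, Nat.sub_lt i.pos Nat.one_pos⟩ * a i

def leftShift {n : ℕ} (a c : Fin n → F4) : Fin n → F4 := fun i =>
  (if h : (i : ℕ) + 1 < n then c ⟨(i : ℕ) + 1, h⟩ else 0) + c ⟨0, i.pos⟩ * a i

def seqShift {n : ℕ} (a c : Fin n → F4) : Fin n → F4 := fun i =>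
  if h : (i : ℕ) + 1 < n then c ⟨(i : ℕ) + 1, h⟩ else ∑ j, a j * c j

def IsRightPolycyclic {n : ℕ} (a : Fin n → F4) (C : AddSubgroup (Fin n → F4)) : Prop :=
  ∀ c ∈ C, rightShift a c ∈ C

def IsLeftPolycyclic {n : ℕ} (a : Fin n → F4) (C : AddSubgroup (Fin n → F4)) : Prop :=
  ∀ c ∈ C, leftShift a c ∈ C

def quotMk {n : ℕ} (a : Fin n → F4) :
    Polynomial F4 →+* Polynomial F4 ⧸ Ideal.span {X ^ n - polyOfVec a} :=
  Ideal.Quotient.mk _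

def codeImage {n : ℕ} (a : Fin n → F4) (C : AddSubgroup (Fin n → F4)) :
    Set (Polynomial F4 ⧸ Ideal.span {X ^ n - polyOfVec a}) :=
  (fun c => quotMk a (polyOfVec c)) '' (C : Set (Fin n → F4))


/- ## Auxiliary lemmas -/

lemma polyOfVec_coeff {n : ℕ} (c : Fin n → F4) (k : ℕ) :
    (polyOfVec c).coeff k = if h : k < n then c ⟨k, h⟩ else 0 := by
  rw [polyOfVec, finset_sum_coeff]
  simp only [coeff_C_mul, coeff_X_pow, mul_ite, mul_one, mul_zero]
  split_ifs with h
  · rw [Finset.sum_eq_single (⟨k, h⟩ : Fin n)]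
    · simp
    · intro i _ hi
      rw [if_neg]; rintro rfl; exact hi (by simp)
    · simp
  · exact Finset.sum_eq_zero fun i _ => by rw [if_neg]; intro hk; omega

lemma polyOfVec_add {n : ℕ} (c c' : Fin n → F4) :
    polyOfVec (c + c') = polyOfVec c + polyOfVec c' := by
  simp [polyOfVec, Finset.sum_add_distrib, add_mul, map_add]

def phi : ZMod 2 →+* F4 := algebraMap (ZMod 2) F4

lemma isBin_iff (z : F4) : IsBin z ↔ z ∈ phi.range := by
  constructor
  · rintro (rfl | rfl)
    exacts [⟨0, map_zero _⟩, ⟨1, map_one _⟩]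
  · rintro ⟨y, rfl⟩
    rcases (by decide : ∀ y : ZMod 2, y = 0 ∨ y = 1) y with rfl | rfl
    · exact Or.inl (map_zero _)
    · exact Or.inr (map_one _)

lemma isBinPoly_iff (p : Polynomial F4) :
    IsBinPoly p ↔ ∃ q : Polynomial (ZMod 2), q.map phi = p := by
  constructor
  · intro h
    obtain ⟨q, hq⟩ := (Polynomial.mem_map_range phi).mpr fun k => (isBin_iff _).mp (h k)
    exact ⟨q, hq⟩
  · rintro ⟨q, rfl⟩ k
    rw [isBin_iff]
    exact ⟨q.coeff k, (coeff_map _ _).symm⟩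

lemma isBin_sub {u v : F4} (hu : IsBin u) (hv : IsBin v) : IsBin (u - v) := by
  rw [isBin_iff] at *
  obtain ⟨x, rfl⟩ := hu; obtain ⟨y, rfl⟩ := hv
  exact ⟨x - y, map_sub _ _ _⟩

lemma shift_eq {n : ℕ} (hn : 0 < n) (a c : Fin n → F4) :
    polyOfVec (rightShift a c) =
      X * polyOfVec c
        - Polynomial.C (c ⟨n - 1, Nat.sub_lt hn Nat.one_pos⟩) * (X ^ n - polyOfVec a) := by
  ext k
  rw [coeff_sub, coeff_C_mul, coeff_sub, coeff_X_pow]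
  rcases k with _ | k
  · rw [mul_coeff_zero, coeff_X_zero, zero_mul]
    rw [polyOfVec_coeff, polyOfVec_coeff, dif_pos hn, dif_pos hn]
    rw [rightShift]
    simp only [reduceIte, if_neg (by omega : ¬ (0:ℕ) = n), zero_add]
    ring
  · rw [coeff_X_mul]
    rw [polyOfVec_coeff, polyOfVec_coeff, polyOfVec_coeff]
    by_cases h1 : k + 1 < n
    · rw [dif_pos h1, dif_pos (by omega : k < n), dif_pos h1, if_neg (by omega : ¬ k + 1 = n)]
      rw [rightShift]
      simp only [if_neg (by omega : ¬ k + 1 = 0)]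
      have : (⟨k + 1 - 1, by omega⟩ : Fin n) = ⟨k, by omega⟩ := rfl
      rw [this]
      ring
    · rw [dif_neg h1]
      by_cases h2 : n = k + 1
      · rw [if_pos h2.symm, dif_pos (by omega : k < n), dif_neg (by omega : ¬ k + 1 < n)]
        have : (⟨k, by omega⟩ : Fin n) = ⟨n - 1, Nat.sub_lt hn Nat.one_pos⟩ := by
          apply Fin.ext; simp; omega
        rw [this]
        ring
      · rw [if_neg (fun h => h2 h.symm), dif_neg (by omega : ¬ k < n),
          dif_neg (by omega : ¬ k + 1 < n)]
        ring

def codeHom {n : ℕ} (a : Fin n → F4) :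
    (Fin n → F4) →+ (Polynomial F4 ⧸ Ideal.span {X ^ n - polyOfVec a}) :=
  AddMonoidHom.mk' (fun c => quotMk a (polyOfVec c)) (by
    intro c c'
    simp [polyOfVec_add, map_add])

lemma codeImage_eq {n : ℕ} (a : Fin n → F4) (C : AddSubgroup (Fin n → F4)) :
    codeImage a C = ↑(AddSubgroup.map (codeHom a) C) := rfl

lemma quotMk_f {n : ℕ} (a : Fin n → F4) : quotMk a (X ^ n - polyOfVec a) = 0 :=
  Ideal.Quotient.eq_zero_iff_mem.mpr (Ideal.subset_span rfl)

lemma pow_mul_mem {n : ℕ} (hn : 0 < n) (a : Fin n → F4) (C : AddSubgroup (Fin n → F4))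
    (hC : IsRightPolycyclic a C) :
    ∀ (m : ℕ) (c : Fin n → F4), c ∈ C →
      ∃ c' ∈ C, quotMk a (polyOfVec c') = quotMk a (X ^ m * polyOfVec c) := by
  intro m
  induction m with
  | zero => intro c hc; exact ⟨c, hc, by simp⟩
  | succ m ih =>
    intro c hc
    obtain ⟨c', hc', h⟩ := ih (rightShift a c) (hC c hc)
    refine ⟨c', hc', ?_⟩
    rw [h]
    have h2 : (quotMk a) (polyOfVec (rightShift a c)) = quotMk a (X * polyOfVec c) := by
      rw [shift_eq hn a c]
      rw [map_sub, map_mul, map_mul, quotMk_f, mul_zero, sub_zero]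
    calc quotMk a (X ^ m * polyOfVec (rightShift a c))
        = quotMk a (X ^ m) * quotMk a (polyOfVec (rightShift a c)) := map_mul _ _ _
      _ = quotMk a (X ^ m) * quotMk a (X * polyOfVec c) := by rw [h2]
      _ = quotMk a (X ^ (m + 1) * polyOfVec c) := by rw [← map_mul]; ring_nf

lemma binPoly_mul_mem {n : ℕ} (hn : 0 < n) (a : Fin n → F4) (C : AddSubgroup (Fin n → F4))
    (hC : IsRightPolycyclic a C) (q b : Polynomial F4) (hq : IsBinPoly q)
    (hb : quotMk a b ∈ codeImage a C) : quotMk a (q * b) ∈ codeImage a C := by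
  obtain ⟨c₀, hc₀, hcb⟩ := hb
  have h1 : quotMk a (q * b) = quotMk a (q * polyOfVec c₀) := by
    rw [map_mul, map_mul, ← hcb]
  rw [h1, codeImage_eq, SetLike.mem_coe]
  have h2 : q * polyOfVec c₀
      = ∑ i ∈ q.support, Polynomial.C (q.coeff i) * X ^ i * polyOfVec c₀ := by
    conv_lhs => rw [q.as_sum_support]
    rw [Finset.sum_mul]
    simp [C_mul_X_pow_eq_monomial]
  rw [h2, map_sum]
  apply AddSubgroup.sum_mem
  intro i _
  rcases hq i with h0 | hone
  · rw [h0, map_zero, zero_mul, zero_mul, map_zero]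
    exact zero_mem _
  · rw [hone, map_one, one_mul]
    obtain ⟨c', hc', hcc⟩ := pow_mul_mem hn a C hC i c₀ hc₀
    exact AddSubgroup.mem_map.mpr ⟨c', hc', hcc⟩

/-- if `b` is a nonzero binary polynomial of degree less than `n`
lying in the additive right polycyclic code `C` (induced by the binary vector
`a`) of minimal degree among all nonzero binary polynomials in `C`, then `b`
divides `x^n - a(x)` in `F2[x]` (i.e. with a binary quotient). -/
theorem stmt_7 (n : ℕ) (hn : 0 < n) (a : Fin n → F4) (ha : IsBinVec a)
    (C : AddSubgroup (Fin n → F4)) (hC : IsRightPolycyclic a C)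
    (b : Polynomial F4) (hbbin : IsBinPoly b) (hb0 : b ≠ 0)
    (hbdeg : b.degree < (n : WithBot ℕ)) (hbmem : quotMk a b ∈ codeImage a C)
    (hbmin : ∀ p : Polynomial F4, IsBinPoly p → p ≠ 0 → p.degree < (n : WithBot ℕ) →
      quotMk a p ∈ codeImage a C → b.degree ≤ p.degree) :
    ∃ q : Polynomial F4, IsBinPoly q ∧ X ^ n - polyOfVec a = b * q := by
  set f : Polynomial F4 := X ^ n - polyOfVec a with hf
  have hfbin : IsBinPoly f := by
    intro k
    rw [hf, coeff_sub, coeff_X_pow]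
    apply isBin_sub
    · split_ifs
      · exact Or.inr rfl
      · exact Or.inl rfl
    · rw [polyOfVec_coeff]
      split_ifs
      · exact ha _
      · exact Or.inl rfl
  obtain ⟨f', hf'⟩ := (isBinPoly_iff f).mp hfbin
  obtain ⟨b', hb'⟩ := (isBinPoly_iff b).mp hbbin
  have hb'0 : b' ≠ 0 := fun h => hb0 (by rw [← hb', h, Polynomial.map_zero])
  have hmono : b'.Monic := by
    have hne := Polynomial.leadingCoeff_ne_zero.mpr hb'0
    rcases (by decide : ∀ y : ZMod 2, y = 0 ∨ y = 1) b'.leadingCoeff with h | h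
    · exact absurd h hne
    · exact h
  have hdegb : b'.degree = b.degree := by
    rw [← hb']; exact (degree_map_eq_of_injective phi.injective _).symm
  set r' : Polynomial (ZMod 2) := f' %ₘ b' with hr'
  set q' : Polynomial (ZMod 2) := f' /ₘ b' with hq'
  have hdiv : f' = b' * q' + r' := by
    rw [add_comm]; exact (modByMonic_add_div f' b').symm
  have hr'deg : r'.degree < b'.degree := degree_modByMonic_lt f' hmono
  set r : Polynomial F4 := r'.map phi with hrdef
  set q : Polynomial F4 := q'.map phi with hqdef
  have hqbin : IsBinPoly q := (isBinPoly_iff q).mpr ⟨q', rfl⟩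
  have hfeq : f = b * q + r := by
    rw [← hf', hdiv, Polynomial.map_add, Polynomial.map_mul, hb']
  have hr0 : r' = 0 := by
    by_contra hrne'
    have hrbin : IsBinPoly r := (isBinPoly_iff r).mpr ⟨r', rfl⟩
    have hrne : r ≠ 0 := by
      rw [hrdef, Ne, Polynomial.map_eq_zero_iff phi.injective]; exact hrne'
    have hrdeg : r.degree = r'.degree := degree_map_eq_of_injective phi.injective _
    have hlt : r.degree < b.degree := by rw [hrdeg, ← hdegb]; exact hr'deg
    have hltn : r.degree < (n : WithBot ℕ) := lt_trans hlt hbdeg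
    have hmem : quotMk a r ∈ codeImage a C := by
      have h0 : quotMk a f = 0 := quotMk_f a
      have h2 : quotMk a r = quotMk a (q * b) := by
        have h3 : r = f - b * q := by rw [hfeq]; ring
        have h4 : (-(b * q) : Polynomial F4) = b * q := CharTwo.neg_eq _
        rw [h3, map_sub, h0, zero_sub, ← map_neg, h4, mul_comm]
      rw [h2]
      exact binPoly_mul_mem hn a C hC q b hqbin hbmem
    exact absurd (hbmin r hrbin hrne hltn hmem) (not_le.mpr hlt)
  refine ⟨q, hqbin, ?_⟩
  rw [hfeq, hrdef, hr0, Polynomial.map_zero, add_zero]
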